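/- Fix f ∈ H. (1) If ∫_ℝ x^{−2} dσ_{f−f*}(x) = A < ∞, then ‖P_{t,s}f − f*‖² ≤ 4A (t−s)^{−2} for all t > s. (2) Conversely, if ‖P_{t,s}f − f*‖² ≤ B (t−s)^{−2} for all t > s, then ∫_ℝ x^{−2} dσ_{f−f*}(x) ≤ 8B. (The measure σ_{f−f*} has no atom at 0, so the integrand x^{−2} is understood on ℝ∖{0}.) -/

import Mathlib

open MeasureTheory Real Set intervalIntegral Filter ENNReal

/-- The Fejér-type kernel `F_τ(x) = (sin(τx/2)/(τx/2))²`. -/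
noncomputable def Fker (τ x : ℝ) : ℝ := (Real.sin (τ * x / 2) / (τ * x / 2)) ^ 2

namespace Stmt18aux

lemma rpow_neg_two (x : ℝ) : x ^ (-2 : ℝ) = (x ^ 2)⁻¹ := by
  rw [show (-2 : ℝ) = ((-2 : ℤ) : ℝ) by norm_num, Real.rpow_intCast, zpow_neg]
  norm_cast

lemma Fker_nonneg (τ x : ℝ) : 0 ≤ Fker τ x := sq_nonneg _

lemma Fker_le_one (τ x : ℝ) : Fker τ x ≤ 1 := by
  have h : |Real.sin (τ * x / 2) / (τ * x / 2)| ≤ 1 := by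
    rcases eq_or_ne (τ * x / 2) 0 with h | h
    · simp [h]
    · rw [abs_div, div_le_one (abs_pos.mpr h)]
      exact Real.abs_sin_le_abs
  calc Fker τ x = |Real.sin (τ * x / 2) / (τ * x / 2)| ^ 2 := (sq_abs _).symm
    _ ≤ 1 ^ 2 := by gcongr
    _ = 1 := one_pow 2

lemma measurable_Fker (τ : ℝ) : Measurable (Fker τ) := by
  unfold Fker
  fun_prop

lemma integrable_Fker (μ : Measure ℝ) [IsFiniteMeasure μ] (τ : ℝ) :
    Integrable (Fker τ) μ := by
  refine (integrable_const (1 : ℝ)).mono' (measurable_Fker τ).aestronglyMeasurable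
    (ae_of_all _ fun x => ?_)
  rw [Real.norm_eq_abs, abs_of_nonneg (Fker_nonneg τ x)]
  exact Fker_le_one τ x

lemma ofReal_integral_Fker (μ : Measure ℝ) [IsFiniteMeasure μ] (hμ0 : μ {0} = 0) (τ : ℝ) :
    ENNReal.ofReal (∫ x, Fker τ x ∂μ)
      = ∫⁻ x in ({0}ᶜ : Set ℝ), ENNReal.ofReal (Fker τ x) ∂μ := by
  rw [ofReal_integral_eq_lintegral_ofReal (integrable_Fker μ τ)
    (ae_of_all _ (Fker_nonneg τ))]
  rw [← lintegral_add_compl (fun x => ENNReal.ofReal (Fker τ x)) (measurableSet_singleton 0)]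
  rw [setLIntegral_measure_zero _ _ hμ0, zero_add]

lemma stepA (μ : Measure ℝ) [IsFiniteMeasure μ] {B τ : ℝ} (hτ : 0 < τ)
    (hb : ∫ x, Fker τ x ∂μ ≤ B * (τ ^ 2)⁻¹) :
    ∫⁻ x in ({0}ᶜ : Set ℝ), ENNReal.ofReal (4 * Real.sin (τ * x / 2) ^ 2 / x ^ 2) ∂μ
      ≤ ENNReal.ofReal B := by
  have hτ0 : τ ≠ 0 := ne_of_gt hτ
  have hcongr : ∫⁻ x in ({0}ᶜ : Set ℝ), ENNReal.ofReal (4 * Real.sin (τ * x / 2) ^ 2 / x ^ 2) ∂μ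
      = ∫⁻ x in ({0}ᶜ : Set ℝ), ENNReal.ofReal (τ ^ 2) * ENNReal.ofReal (Fker τ x) ∂μ := by
    refine setLIntegral_congr_fun (measurableSet_singleton 0).compl (fun x hx => ?_)
    have hx0 : x ≠ 0 := hx
    rw [← ENNReal.ofReal_mul (by positivity)]
    congr 1
    unfold Fker
    rw [div_pow]
    field_simp
    ring
  rw [hcongr, lintegral_const_mul' _ _ ENNReal.ofReal_ne_top]
  calc ENNReal.ofReal (τ ^ 2) * ∫⁻ x in ({0}ᶜ : Set ℝ), ENNReal.ofReal (Fker τ x) ∂μ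
      ≤ ENNReal.ofReal (τ ^ 2) * ∫⁻ x, ENNReal.ofReal (Fker τ x) ∂μ := by
        gcongr
        exact Measure.restrict_le_self
    _ = ENNReal.ofReal (τ ^ 2) * ENNReal.ofReal (∫ x, Fker τ x ∂μ) := by
        rw [ofReal_integral_eq_lintegral_ofReal (integrable_Fker μ τ)
          (ae_of_all _ (Fker_nonneg τ))]
    _ ≤ ENNReal.ofReal (τ ^ 2) * ENNReal.ofReal (B * (τ ^ 2)⁻¹) := by
        gcongr
    _ = ENNReal.ofReal (τ ^ 2 * (B * (τ ^ 2)⁻¹)) := (ENNReal.ofReal_mul (by positivity)).symm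
    _ = ENNReal.ofReal B := by
        congr 1
        field_simp

lemma ftc {x : ℝ} (hx : x ≠ 0) (n : ℝ) :
    ∫ τ in (0:ℝ)..n, 4 * Real.sin (τ * x / 2) ^ 2 / x ^ 2
      = 2 * n / x ^ 2 - 2 * Real.sin (n * x) / x ^ 3 := by
  have key : ∀ τ : ℝ, HasDerivAt (fun τ => 2 * τ / x ^ 2 - 2 * Real.sin (τ * x) / x ^ 3)
      (4 * Real.sin (τ * x / 2) ^ 2 / x ^ 2) τ := by
    intro τ
    have h1 : HasDerivAt (fun τ : ℝ => Real.sin (τ * x)) (Real.cos (τ * x) * x) τ :=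
      (hasDerivAt_mul_const x).sin
    have h2 : HasDerivAt (fun τ : ℝ => 2 * τ / x ^ 2 - 2 * Real.sin (τ * x) / x ^ 3)
        (2 * 1 / x ^ 2 - 2 * (Real.cos (τ * x) * x) / x ^ 3) τ :=
      (((hasDerivAt_id τ).const_mul 2).div_const (x ^ 2)).sub
        ((h1.const_mul 2).div_const (x ^ 3))
    convert h2 using 1
    have hs : Real.sin (τ * x / 2) ^ 2 = 1 / 2 - Real.cos (2 * (τ * x / 2)) / 2 :=
      Real.sin_sq_eq_half_sub _
    rw [show 2 * (τ * x / 2) = τ * x by ring] at hs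
    rw [hs]
    field_simp
    ring
  rw [intervalIntegral.integral_eq_sub_of_hasDerivAt (fun τ _ => key τ)
    (by apply Continuous.intervalIntegrable; fun_prop)]
  simp

lemma ioc_lintegral {x : ℝ} (hx : x ≠ 0) {n : ℝ} (hn : 0 ≤ n) :
    ∫⁻ τ in Ioc (0:ℝ) n, ENNReal.ofReal (4 * Real.sin (τ * x / 2) ^ 2 / x ^ 2)
      = ENNReal.ofReal (2 * n / x ^ 2 - 2 * Real.sin (n * x) / x ^ 3) := by
  have hcont : Continuous fun τ : ℝ => 4 * Real.sin (τ * x / 2) ^ 2 / x ^ 2 := by fun_prop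
  rw [← ofReal_integral_eq_lintegral_ofReal (hcont.integrableOn_Ioc)
    (ae_of_all _ fun τ => by positivity)]
  rw [← intervalIntegral.integral_of_le hn, ftc hx n]

end Stmt18aux

open Stmt18aux

theorem stmt18
    {H : Type*} [NormedAddCommGroup H] [InnerProductSpace ℂ H] [CompleteSpace H]
    (U : ℝ → H →L[ℂ] H)
    (hUgrp : ∀ a b : ℝ, U (a + b) = (U a).comp (U b))
    (hUiso : ∀ (τ : ℝ) (g : H), ‖U τ g‖ = ‖g‖)
    (f fstar : H)
    (hcont : Continuous fun τ : ℝ => U τ f)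
    (hfix : ∀ τ : ℝ, U τ fstar = fstar)
    (horth : ∀ g : H, (∀ τ : ℝ, U τ g = g) → (inner ℂ (f - fstar) g : ℂ) = 0)
    (μ : Measure ℝ) [IsFiniteMeasure μ] (hμ0 : μ {0} = 0)
    (hrep : ∀ s t : ℝ, s < t →
      ‖(t - s)⁻¹ • (∫ τ in s..t, U τ f) - fstar‖ ^ 2 = ∫ x, Fker (t - s) x ∂μ)
    -- the total mass of the spectral measure of f - f* is ‖f - f*‖²
    (hμtot : μ Set.univ = ENNReal.ofReal (‖f - fstar‖ ^ 2))
    (B : ℝ) :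
    ((∫⁻ x in ({0}ᶜ : Set ℝ), ENNReal.ofReal (x ^ (-2 : ℝ)) ∂μ ≠ ⊤) →
      ∀ s t : ℝ, s < t →
        ‖(t - s)⁻¹ • (∫ τ in s..t, U τ f) - fstar‖ ^ 2 ≤
          4 * (∫⁻ x in ({0}ᶜ : Set ℝ), ENNReal.ofReal (x ^ (-2 : ℝ)) ∂μ).toReal *
            (t - s) ^ (-2 : ℝ)) ∧
    ((0 < B ∧ ∀ s t : ℝ, s < t →
        ‖(t - s)⁻¹ • (∫ τ in s..t, U τ f) - fstar‖ ^ 2 ≤ B * (t - s) ^ (-2 : ℝ)) →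
      ∫⁻ x in ({0}ᶜ : Set ℝ), ENNReal.ofReal (x ^ (-2 : ℝ)) ∂μ ≤ ENNReal.ofReal (8 * B)) := by
  set L := ∫⁻ x in ({0}ᶜ : Set ℝ), ENNReal.ofReal (x ^ (-2 : ℝ)) ∂μ with hLdef
  constructor
  · -- Part 1
    intro hL s t hst
    have hτ : 0 < t - s := sub_pos.mpr hst
    rw [hrep s t hst]
    have key : ENNReal.ofReal (∫ x, Fker (t - s) x ∂μ)
        ≤ ENNReal.ofReal (4 * ((t - s) ^ 2)⁻¹) * L := by
      rw [ofReal_integral_Fker μ hμ0 (t - s)]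
      calc ∫⁻ x in ({0}ᶜ : Set ℝ), ENNReal.ofReal (Fker (t - s) x) ∂μ
          ≤ ∫⁻ x in ({0}ᶜ : Set ℝ),
              ENNReal.ofReal (4 * ((t - s) ^ 2)⁻¹) * ENNReal.ofReal (x ^ (-2 : ℝ)) ∂μ := by
            refine lintegral_mono_ae ((ae_restrict_iff'
              (measurableSet_singleton 0).compl).mpr (ae_of_all _ fun x hx => ?_))
            have hx0 : x ≠ 0 := hx
            rw [← ENNReal.ofReal_mul (by positivity)]
            apply ENNReal.ofReal_le_ofReal
            rw [rpow_neg_two]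
            unfold Fker
            rw [div_pow]
            have hy : (0:ℝ) < ((t - s) * x / 2) ^ 2 := by positivity
            calc Real.sin ((t - s) * x / 2) ^ 2 / ((t - s) * x / 2) ^ 2
                ≤ 1 / ((t - s) * x / 2) ^ 2 := by
                  gcongr
                  rw [← Real.sin_sq_add_cos_sq ((t - s) * x / 2)]
                  nlinarith [sq_nonneg (Real.cos ((t - s) * x / 2))]
              _ = 4 * ((t - s) ^ 2)⁻¹ * (x ^ 2)⁻¹ := by
                  field_simp
                  ring
        _ = ENNReal.ofReal (4 * ((t - s) ^ 2)⁻¹) * L :=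
            lintegral_const_mul' _ _ ENNReal.ofReal_ne_top
    have h0 : 0 ≤ ∫ x, Fker (t - s) x ∂μ := integral_nonneg (Fker_nonneg (t - s))
    calc ∫ x, Fker (t - s) x ∂μ
        = (ENNReal.ofReal (∫ x, Fker (t - s) x ∂μ)).toReal := (ENNReal.toReal_ofReal h0).symm
      _ ≤ (ENNReal.ofReal (4 * ((t - s) ^ 2)⁻¹) * L).toReal :=
          ENNReal.toReal_mono (ENNReal.mul_ne_top ENNReal.ofReal_ne_top hL) key
      _ = 4 * ((t - s) ^ 2)⁻¹ * L.toReal := by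
          rw [ENNReal.toReal_mul, ENNReal.toReal_ofReal (by positivity)]
      _ = 4 * L.toReal * (t - s) ^ (-2 : ℝ) := by
          rw [rpow_neg_two]
          ring
  · -- Part 2
    rintro ⟨hB, hbound⟩
    have hA : ∀ τ : ℝ, 0 < τ →
        ∫⁻ x in ({0}ᶜ : Set ℝ), ENNReal.ofReal (4 * Real.sin (τ * x / 2) ^ 2 / x ^ 2) ∂μ
          ≤ ENNReal.ofReal B := by
      intro τ hτ
      apply stepA μ hτ
      have h1 : ∫ x, Fker (τ - 0) x ∂μ ≤ B * (τ - 0) ^ (-2 : ℝ) :=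
        (hrep 0 τ hτ) ▸ (hbound 0 τ hτ)
      rwa [sub_zero, rpow_neg_two] at h1
    -- Tonelli
    have hKmeas : Measurable fun p : ℝ × ℝ =>
        ENNReal.ofReal (4 * Real.sin (p.1 * p.2 / 2) ^ 2 / p.2 ^ 2) := by fun_prop
    have hswap : ∀ n : ℕ,
        ∫⁻ x in ({0}ᶜ : Set ℝ),
            (∫⁻ τ in Ioc (0:ℝ) n, ENNReal.ofReal (4 * Real.sin (τ * x / 2) ^ 2 / x ^ 2)) ∂μ
          ≤ ENNReal.ofReal B * ENNReal.ofReal n := by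
      intro n
      rw [lintegral_lintegral_swap (by fun_prop)]
      calc ∫⁻ τ in Ioc (0:ℝ) n,
            (∫⁻ x in ({0}ᶜ : Set ℝ), ENNReal.ofReal (4 * Real.sin (τ * x / 2) ^ 2 / x ^ 2) ∂μ)
          ≤ ∫⁻ _ in Ioc (0:ℝ) n, ENNReal.ofReal B := by
            refine lintegral_mono_ae ((ae_restrict_iff' measurableSet_Ioc).mpr
              (ae_of_all _ fun τ hτ => hA τ hτ.1))
        _ = ENNReal.ofReal B * volume (Ioc (0:ℝ) n) := setLIntegral_const _ _
        _ = ENNReal.ofReal B * ENNReal.ofReal n := by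
            rw [Real.volume_Ioc, sub_zero]
    -- the averaged functions
    set ψ : ℕ → ℝ → ℝ≥0∞ := fun n x =>
      ENNReal.ofReal (2 / x ^ 2 - 2 * Real.sin (n * x) / (n * x ^ 3)) with hψdef
    have hψmeas : ∀ n : ℕ, Measurable (ψ n) := fun n => by fun_prop
    have hψle : ∀ n : ℕ, 1 ≤ n →
        ∫⁻ x in ({0}ᶜ : Set ℝ), ψ n x ∂μ ≤ ENNReal.ofReal B := by
      intro n hn
      have hnpos : (0:ℝ) < n := by exact_mod_cast hn
      have hcongr : ∫⁻ x in ({0}ᶜ : Set ℝ), ψ n x ∂μ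
          = ∫⁻ x in ({0}ᶜ : Set ℝ), ENNReal.ofReal (1 / n) *
              (∫⁻ τ in Ioc (0:ℝ) n, ENNReal.ofReal (4 * Real.sin (τ * x / 2) ^ 2 / x ^ 2)) ∂μ := by
        refine setLIntegral_congr_fun (measurableSet_singleton 0).compl
          (fun x hx => ?_)
        have hx0 : x ≠ 0 := hx
        simp only [hψdef]
        rw [ioc_lintegral hx0 hnpos.le, ← ENNReal.ofReal_mul (by positivity)]
        congr 1
        field_simp
      rw [hcongr, lintegral_const_mul' _ _ ENNReal.ofReal_ne_top]
      calc ENNReal.ofReal (1 / n) * ∫⁻ x in ({0}ᶜ : Set ℝ),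
            (∫⁻ τ in Ioc (0:ℝ) n, ENNReal.ofReal (4 * Real.sin (τ * x / 2) ^ 2 / x ^ 2)) ∂μ
          ≤ ENNReal.ofReal (1 / n) * (ENNReal.ofReal B * ENNReal.ofReal n) := by
            gcongr
            exact hswap n
        _ = (ENNReal.ofReal (1 / n) * ENNReal.ofReal n) * ENNReal.ofReal B := by ring
        _ = ENNReal.ofReal B := by
            rw [← ENNReal.ofReal_mul (by positivity), one_div,
              inv_mul_cancel₀ (ne_of_gt hnpos), ENNReal.ofReal_one, one_mul]
    -- pointwise limit
    have hlim : ∀ x : ℝ, x ≠ 0 →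
        Tendsto (fun n : ℕ => ψ n x) atTop (nhds (ENNReal.ofReal (2 / x ^ 2))) := by
      intro x hx
      have h0 : Tendsto (fun n : ℕ => 2 * Real.sin (n * x) / (n * x ^ 3)) atTop (nhds 0) := by
        refine squeeze_zero_norm (f := fun n : ℕ => 2 * Real.sin (n * x) / (n * x ^ 3))
          (a := fun n : ℕ => 2 / |x| ^ 3 * (1 / (n:ℝ))) (fun n => ?_) ?_
        · rcases Nat.eq_zero_or_pos n with h | h
          · simp [h]
          · have hn : (0:ℝ) < n := by exact_mod_cast h
            rw [Real.norm_eq_abs, abs_div, abs_mul]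
            rw [div_le_iff₀ (by positivity)]
            have h1 : |Real.sin ((n:ℝ) * x)| ≤ 1 := Real.abs_sin_le_one _
            have h2 : |(n:ℝ) * x ^ 3| = n * |x| ^ 3 := by
              rw [abs_mul, abs_of_nonneg hn.le, abs_pow]
            rw [h2]
            have hax : (0:ℝ) < |x| := abs_pos.mpr hx
            calc |2| * |Real.sin ((n:ℝ) * x)| ≤ 2 * 1 := by
                  rw [abs_of_nonneg (by norm_num : (0:ℝ) ≤ 2)]
                  gcongr
              _ = 2 / |x| ^ 3 * (1 / n) * (n * |x| ^ 3) := by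
                  field_simp
        · rw [show (0:ℝ) = 2 / |x| ^ 3 * 0 by ring]
          exact tendsto_const_nhds.mul tendsto_one_div_atTop_nhds_zero_nat
      have hreal : Tendsto (fun n : ℕ => 2 / x ^ 2 - 2 * Real.sin (n * x) / (n * x ^ 3))
          atTop (nhds (2 / x ^ 2)) := by
        simpa using tendsto_const_nhds.sub h0
      exact (ENNReal.continuous_ofReal.tendsto _).comp hreal
    have hliminf : ∀ᵐ x ∂(μ.restrict ({0}ᶜ : Set ℝ)),
        2 * ENNReal.ofReal (x ^ (-2 : ℝ)) ≤ liminf (fun n : ℕ => ψ n x) atTop := by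
      refine (ae_restrict_iff' (measurableSet_singleton 0).compl).mpr
        (ae_of_all _ fun x hx => ?_)
      have hx0 : x ≠ 0 := hx
      rw [(hlim x hx0).liminf_eq]
      apply le_of_eq
      rw [rpow_neg_two, show (2:ℝ≥0∞) = ENNReal.ofReal 2 by simp,
        ← ENNReal.ofReal_mul (by norm_num)]
      congr 1
    have h2J : 2 * L ≤ ENNReal.ofReal B := by
      rw [hLdef, ← lintegral_const_mul' _ _ (by norm_num : (2:ℝ≥0∞) ≠ ⊤)]
      calc ∫⁻ x in ({0}ᶜ : Set ℝ), 2 * ENNReal.ofReal (x ^ (-2 : ℝ)) ∂μ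
          ≤ ∫⁻ x in ({0}ᶜ : Set ℝ), liminf (fun n : ℕ => ψ n x) atTop ∂μ :=
            lintegral_mono_ae hliminf
        _ ≤ liminf (fun n : ℕ => ∫⁻ x in ({0}ᶜ : Set ℝ), ψ n x ∂μ) atTop :=
            lintegral_liminf_le hψmeas
        _ ≤ liminf (fun _ : ℕ => ENNReal.ofReal B) atTop := by
            refine Filter.liminf_le_liminf ?_ ?_ ?_
            · filter_upwards [eventually_ge_atTop 1] with n hn
              exact hψle n hn
            · exact Filter.isBounded_ge_of_bot
            · exact Filter.isCobounded_ge_of_top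
        _ = ENNReal.ofReal B := liminf_const _
    have hfin : ENNReal.ofReal B ≤ 2 * ENNReal.ofReal (8 * B) := by
      rw [show (2:ℝ≥0∞) = ENNReal.ofReal 2 by simp, ← ENNReal.ofReal_mul (by norm_num)]
      exact ENNReal.ofReal_le_ofReal (by linarith)
    exact (ENNReal.mul_le_mul_iff_right two_ne_zero (by norm_num)).mp (h2J.trans hfin)
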